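/- Suppose 5β + 2λ < 1 and β < 1/20. If u and v lie in the same connected component of the sparsified graph G̃ and at least one of them is heavy, then u and v are in 4-weak agreement: |N(u) △ N(v)| < 4β·max(d(u), d(v)). -/

import Mathlib

open Finset Classical

noncomputable section

variable {V : Type*} [Fintype V] [DecidableEq V]

/-- Closed neighborhood of `v` in `G` (each vertex is its own neighbor). -/
def closedNbhd (G : SimpleGraph V) (v : V) : Finset V :=
  insert v (G.neighborFinset v)

/-- Degree `d(v) = |N(v)|` (closed neighborhoods). -/
def deg (G : SimpleGraph V) (v : V) : ℕ := (closedNbhd G v).card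

/-- `u` and `v` are in agreement: `|N(u) △ N(v)| < β·max(d(u), d(v))`. -/
def Agree (β : ℝ) (G : SimpleGraph V) (u v : V) : Prop :=
  ((symmDiff (closedNbhd G u) (closedNbhd G v)).card : ℝ)
    < β * max (deg G u : ℝ) (deg G v : ℝ)

/-- The graph after Line 1: discard all edges whose endpoints are not in agreement. -/
def agreeGraph (β : ℝ) (G : SimpleGraph V) : SimpleGraph V where
  Adj u v := G.Adj u v ∧ Agree β G u v
  symm := by
    constructor
    intro a b h
    refine ⟨h.1.symm, ?_⟩
    have := h.2
    unfold Agree at *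
    rwa [symmDiff_comm, max_comm] at this
  loopless := ⟨fun a h => G.loopless.irrefl a h.1⟩

/-- A vertex is light if it lost more than a `λ`-fraction of its neighbors
when passing from `G` to the agreement graph. -/
def Light (β lam : ℝ) (G : SimpleGraph V) (v : V) : Prop :=
  (deg G v : ℝ) - (deg (agreeGraph β G) v : ℝ) > lam * (deg G v : ℝ)

/-- A vertex is heavy if it is not light. -/
def Heavy (β lam : ℝ) (G : SimpleGraph V) (v : V) : Prop := ¬ Light β lam G v

/-- The sparsified graph `G̃`: additionally discard all edges between two
light vertices. -/
def sparsified (β lam : ℝ) (G : SimpleGraph V) : SimpleGraph V where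
  Adj u v := (agreeGraph β G).Adj u v ∧ (Heavy β lam G u ∨ Heavy β lam G v)
  symm := ⟨fun a b h => ⟨h.1.symm, h.2.symm⟩⟩
  loopless := ⟨fun a h => (agreeGraph β G).loopless.irrefl a h.1⟩

namespace Stmt7Aux

lemma one_le_deg (G : SimpleGraph V) (v : V) : (1:ℝ) ≤ (deg G v : ℝ) := by
  have : 0 < (closedNbhd G v).card := Finset.card_pos.2 ⟨v, Finset.mem_insert_self _ _⟩
  exact_mod_cast this

lemma deg_le_add (G : SimpleGraph V) (x z : V) :
    (deg G z : ℝ) ≤ (deg G x : ℝ) + ((symmDiff (closedNbhd G x) (closedNbhd G z)).card : ℝ) := by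
  have hsub : closedNbhd G z ⊆ closedNbhd G x ∪ symmDiff (closedNbhd G x) (closedNbhd G z) := by
    intro a ha
    by_cases h : a ∈ closedNbhd G x
    · exact Finset.mem_union_left _ h
    · exact Finset.mem_union_right _ (Finset.mem_symmDiff.2 (Or.inr ⟨ha, h⟩))
  have h1 := (Finset.card_le_card hsub).trans (Finset.card_union_le _ _)
  unfold deg
  exact_mod_cast h1

lemma symm_triangle (s t u : Finset V) :
    ((symmDiff s u).card : ℝ) ≤ ((symmDiff s t).card : ℝ) + ((symmDiff t u).card : ℝ) := by
  have h : symmDiff s u ⊆ symmDiff s t ∪ symmDiff t u := by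
    have := symmDiff_triangle s t u
    simpa [Finset.sup_eq_union] using this
  have h1 := (Finset.card_le_card h).trans (Finset.card_union_le _ _)
  exact_mod_cast h1

lemma agree_degle {β : ℝ} {G : SimpleGraph V} (hβ0 : 0 < β) {x z : V} (h : Agree β G x z) :
    (1 - β) * (deg G z : ℝ) ≤ (deg G x : ℝ) := by
  have hd := deg_le_add G x z
  unfold Agree at h
  rcases le_total (deg G z : ℝ) (deg G x : ℝ) with hc | hc
  · nlinarith [one_le_deg G z]
  · rw [max_eq_right hc] at h
    linarith

lemma agree_symm_le {β : ℝ} {G : SimpleGraph V} (hβ0 : 0 < β) (hβ : β < 1/20) {x z : V}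
    (h : Agree β G x z) :
    (1 - β) * ((symmDiff (closedNbhd G x) (closedNbhd G z)).card : ℝ) ≤ β * (deg G x : ℝ) := by
  have h2 := agree_degle hβ0 h
  unfold Agree at h
  have hS0 : (0:ℝ) ≤ ((symmDiff (closedNbhd G x) (closedNbhd G z)).card : ℝ) := Nat.cast_nonneg _
  rcases max_cases (deg G x : ℝ) (deg G z : ℝ) with ⟨he, _⟩ | ⟨he, _⟩ <;> rw [he] at h
  · nlinarith
  · nlinarith [mul_le_mul_of_nonneg_left h2 hβ0.le]

lemma heavy_card {β lam : ℝ} {G : SimpleGraph V} {v : V} (h : Heavy β lam G v) :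
    (1 - lam) * (deg G v : ℝ) ≤ ((closedNbhd (agreeGraph β G) v).card : ℝ) := by
  unfold Heavy Light at h
  push_neg at h
  have he : ((closedNbhd (agreeGraph β G) v).card : ℝ) = (deg (agreeGraph β G) v : ℝ) := rfl
  rw [he]
  linarith

lemma closedNbhd_subset (β : ℝ) (G : SimpleGraph V) (v : V) :
    closedNbhd (agreeGraph β G) v ⊆ closedNbhd G v := by
  intro a ha
  rcases Finset.mem_insert.1 ha with h | h
  · exact h ▸ Finset.mem_insert_self _ _
  · rw [SimpleGraph.mem_neighborFinset] at h
    refine Finset.mem_insert.2 (Or.inr ?_)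
    rw [SimpleGraph.mem_neighborFinset]
    exact h.1

lemma chain {β lam : ℝ} {G : SimpleGraph V} (hβ0 : 0 < β) (hβ : β < 1/20) :
    ∀ {x y : V} (p : (sparsified β lam G).Walk x y),
      (1-β)^p.length * (deg G y : ℝ) ≤ (deg G x : ℝ) ∧
      (1-β)^p.length * ((symmDiff (closedNbhd G x) (closedNbhd G y)).card : ℝ)
        ≤ p.length * β * (deg G x : ℝ) := by
  intro x y p
  induction p with
  | nil => simp [symmDiff_self]
  | @cons x z y h q ih =>
    have hAg : Agree β G x z := h.1.2
    have hdz := agree_degle hβ0 hAg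
    have hSe := agree_symm_le hβ0 hβ hAg
    have hc0 : (0:ℝ) ≤ 1 - β := by linarith
    have hc1 : (1:ℝ) - β ≤ 1 := by linarith
    obtain ⟨ih1, ih2⟩ := ih
    set k := q.length with hk
    have hak : (0:ℝ) ≤ (1-β)^k := pow_nonneg hc0 k
    have ha1 : (1-β)^k ≤ 1 := pow_le_one₀ hc0 hc1
    have hdy0 : (0:ℝ) ≤ (deg G y : ℝ) := Nat.cast_nonneg _
    have htri := symm_triangle (closedNbhd G x) (closedNbhd G z) (closedNbhd G y)
    have hS0 : (0:ℝ) ≤ ((symmDiff (closedNbhd G x) (closedNbhd G z)).card : ℝ) := Nat.cast_nonneg _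
    have hS0' : (0:ℝ) ≤ ((symmDiff (closedNbhd G z) (closedNbhd G y)).card : ℝ) := Nat.cast_nonneg _
    constructor
    · have hlen : (SimpleGraph.Walk.cons h q).length = k + 1 := by
        simp [SimpleGraph.Walk.length_cons, hk]
      rw [hlen, pow_succ]
      calc (1-β)^k * (1-β) * (deg G y : ℝ) = (1-β) * ((1-β)^k * (deg G y : ℝ)) := by ring
        _ ≤ (1-β) * (deg G z : ℝ) := mul_le_mul_of_nonneg_left ih1 hc0
        _ ≤ (deg G x : ℝ) := hdz
    · have hlen : (SimpleGraph.Walk.cons h q).length = k + 1 := by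
        simp [SimpleGraph.Walk.length_cons, hk]
      rw [hlen, pow_succ]
      push_cast
      have step1 : (1-β)^k * (1-β) * ((symmDiff (closedNbhd G x) (closedNbhd G y)).card : ℝ)
          ≤ (1-β)^k * (1-β) * (((symmDiff (closedNbhd G x) (closedNbhd G z)).card : ℝ)
            + ((symmDiff (closedNbhd G z) (closedNbhd G y)).card : ℝ)) :=
        mul_le_mul_of_nonneg_left htri (by positivity)
      have step2 : (1-β)^k * ((1-β) * ((symmDiff (closedNbhd G x) (closedNbhd G z)).card : ℝ))
          ≤ β * (deg G x : ℝ) := by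
        calc (1-β)^k * ((1-β) * ((symmDiff (closedNbhd G x) (closedNbhd G z)).card : ℝ))
            ≤ 1 * ((1-β) * ((symmDiff (closedNbhd G x) (closedNbhd G z)).card : ℝ)) :=
              mul_le_mul_of_nonneg_right ha1 (by positivity)
          _ = (1-β) * ((symmDiff (closedNbhd G x) (closedNbhd G z)).card : ℝ) := by ring
          _ ≤ β * (deg G x : ℝ) := hSe
      have step3 : (1-β) * ((1-β)^k * ((symmDiff (closedNbhd G z) (closedNbhd G y)).card : ℝ))
          ≤ (k:ℝ) * β * (deg G x : ℝ) := by
        calc (1-β) * ((1-β)^k * ((symmDiff (closedNbhd G z) (closedNbhd G y)).card : ℝ))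
            ≤ (1-β) * ((k:ℝ) * β * (deg G z : ℝ)) := mul_le_mul_of_nonneg_left ih2 hc0
          _ = (k:ℝ) * β * ((1-β) * (deg G z : ℝ)) := by ring
          _ ≤ (k:ℝ) * β * (deg G x : ℝ) := by
              apply mul_le_mul_of_nonneg_left hdz
              positivity
      nlinarith [step1, step2, step3]

set_option maxHeartbeats 2000000 in
lemma a4 {β lam : ℝ} {G : SimpleGraph V} (hβ0 : 0 < β) (hβ : β < 1/20) (hlam0 : 0 < lam)
    (hparams : 5*β + 2*lam < 1) {x y : V}
    (hx : Heavy β lam G x) (hy : Heavy β lam G y)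
    (p : (sparsified β lam G).Walk x y) (hp : p.length ≤ 4) :
    ∃ r : (sparsified β lam G).Walk x y, r.length ≤ 2 := by
  classical
  set A := closedNbhd (agreeGraph β G) x with hAdef
  set B := closedNbhd (agreeGraph β G) y with hBdef
  have hA := heavy_card hx
  have hB := heavy_card hy
  have hc0 : (0:ℝ) ≤ 1 - β := by linarith
  have hc1 : (1:ℝ) - β ≤ 1 := by linarith
  -- symm diff bound from the walk
  have hch := (chain hβ0 hβ p).2
  set S := ((symmDiff (closedNbhd G x) (closedNbhd G y)).card : ℝ) with hSdef
  have hS0 : (0:ℝ) ≤ S := Nat.cast_nonneg _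
  have hS4 : (1-β)^4 * S ≤ 4 * β * (deg G x : ℝ) := by
    have h1 : (1-β)^4 ≤ (1-β)^p.length := pow_le_pow_of_le_one hc0 hc1 hp
    have h2 : (1-β)^4 * S ≤ (1-β)^p.length * S := mul_le_mul_of_nonneg_right h1 hS0
    have h3 : (p.length : ℝ) * β * (deg G x : ℝ) ≤ 4 * β * (deg G x : ℝ) := by
      have : (p.length : ℝ) ≤ 4 := by exact_mod_cast hp
      have hd0 : (0:ℝ) ≤ β * (deg G x : ℝ) := by positivity
      nlinarith
    linarith
  have h45 : (4:ℝ) < 5 * (1-β)^4 := by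
    have h1 : ((19:ℝ)/20)^4 < (1-β)^4 :=
      pow_lt_pow_left₀ (by linarith) (by norm_num) (by norm_num)
    nlinarith
  have hS5 : S ≤ 5 * β * (deg G x : ℝ) := by nlinarith
  -- union bound
  have hsubA : A ⊆ closedNbhd G x := closedNbhd_subset β G x
  have hsubB : B ⊆ closedNbhd G y := closedNbhd_subset β G y
  have hsub : A ∪ B ⊆ (closedNbhd G x ∩ closedNbhd G y) ∪ symmDiff (closedNbhd G x) (closedNbhd G y) := by
    intro a ha
    rcases Finset.mem_union.1 ha with h | h
    · have hax : a ∈ closedNbhd G x := hsubA h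
      by_cases hay : a ∈ closedNbhd G y
      · exact Finset.mem_union_left _ (Finset.mem_inter.2 ⟨hax, hay⟩)
      · exact Finset.mem_union_right _ (Finset.mem_symmDiff.2 (Or.inl ⟨hax, hay⟩))
    · have hay : a ∈ closedNbhd G y := hsubB h
      by_cases hax : a ∈ closedNbhd G x
      · exact Finset.mem_union_left _ (Finset.mem_inter.2 ⟨hax, hay⟩)
      · exact Finset.mem_union_right _ (Finset.mem_symmDiff.2 (Or.inr ⟨hay, hax⟩))
  have hcu : ((A ∪ B).card : ℝ) ≤ ((closedNbhd G x ∩ closedNbhd G y).card : ℝ) + S := by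
    have h1 := (Finset.card_le_card hsub).trans (Finset.card_union_le _ _)
    rw [hSdef]
    exact_mod_cast h1
  have hm1 : ((closedNbhd G x ∩ closedNbhd G y).card : ℝ) ≤ (deg G x : ℝ) := by
    have h := Finset.card_le_card
      (Finset.inter_subset_left : closedNbhd G x ∩ closedNbhd G y ⊆ closedNbhd G x)
    exact_mod_cast h
  have hm2 : ((closedNbhd G x ∩ closedNbhd G y).card : ℝ) ≤ (deg G y : ℝ) := by
    have h := Finset.card_le_card
      (Finset.inter_subset_right : closedNbhd G x ∩ closedNbhd G y ⊆ closedNbhd G y)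
    exact_mod_cast h
  have hsum : ((A ∩ B).card : ℝ) + ((A ∪ B).card : ℝ) = (A.card : ℝ) + (B.card : ℝ) := by
    exact_mod_cast Finset.card_inter_add_card_union A B
  have hdx := one_le_deg G x
  have hdy := one_le_deg G y
  have hlam1 : lam < 1 := by linarith
  have hpos : (0:ℝ) < ((A ∩ B).card : ℝ) := by
    rcases le_total (deg G x : ℝ) (deg G y : ℝ) with hcmp | hcmp
    · nlinarith [mul_nonneg (by linarith : (0:ℝ) ≤ 1 - lam) (by linarith : (0:ℝ) ≤ (deg G y : ℝ) - (deg G x : ℝ))]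
    · nlinarith [mul_nonneg hlam0.le (by linarith : (0:ℝ) ≤ (deg G x : ℝ) - (deg G y : ℝ))]
  have hne : (A ∩ B).Nonempty := Finset.card_pos.1 (by exact_mod_cast hpos)
  obtain ⟨z, hz⟩ := hne
  have hzA : z ∈ A := (Finset.mem_inter.1 hz).1
  have hzB : z ∈ B := (Finset.mem_inter.1 hz).2
  rw [hAdef] at hzA
  rw [hBdef] at hzB
  rcases Finset.mem_insert.1 hzA with heqx | hzA'
  · rcases Finset.mem_insert.1 hzB with heqy | hzB'
    · have hxy : x = y := heqx.symm.trans heqy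
      subst hxy
      exact ⟨SimpleGraph.Walk.nil, by simp⟩
    · rw [SimpleGraph.mem_neighborFinset] at hzB'
      rw [heqx] at hzB'
      have e : (sparsified β lam G).Adj x y := ⟨hzB'.symm, Or.inl hx⟩
      exact ⟨SimpleGraph.Walk.cons e SimpleGraph.Walk.nil, by simp⟩
  · rw [SimpleGraph.mem_neighborFinset] at hzA'
    rcases Finset.mem_insert.1 hzB with heqy | hzB'
    · rw [heqy] at hzA'
      have e : (sparsified β lam G).Adj x y := ⟨hzA', Or.inl hx⟩
      exact ⟨SimpleGraph.Walk.cons e SimpleGraph.Walk.nil, by simp⟩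
    · rw [SimpleGraph.mem_neighborFinset] at hzB'
      have e1 : (sparsified β lam G).Adj x z := ⟨hzA', Or.inl hx⟩
      have e2 : (sparsified β lam G).Adj z y := ⟨hzB'.symm, Or.inr hy⟩
      exact ⟨SimpleGraph.Walk.cons e1 (SimpleGraph.Walk.cons e2 SimpleGraph.Walk.nil), by simp⟩

lemma claimB {β lam : ℝ} {G : SimpleGraph V} (hβ0 : 0 < β) (hβ : β < 1/20) (hlam0 : 0 < lam)
    (hparams : 5*β + 2*lam < 1) :
    ∀ (n : ℕ) {x y : V}, Heavy β lam G x → Heavy β lam G y →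
      ∀ p : (sparsified β lam G).Walk x y, p.length ≤ n →
      ∃ r : (sparsified β lam G).Walk x y, r.length ≤ 2 := by
  intro n
  induction n using Nat.strong_induction_on with
  | _ n ih =>
    intro x y hx hy p hp
    by_cases h4 : p.length ≤ 4
    · exact a4 hβ0 hβ hlam0 hparams hx hy p h4
    · push_neg at h4
      cases p with
      | nil => simp at h4
      | @cons _ z1 _ h q =>
        cases q with
        | nil => simp at h4
        | @cons _ z2 _ h2 q2 =>
          simp only [SimpleGraph.Walk.length_cons] at hp h4
          rcases h2.2 with hz1 | hz2
          · obtain ⟨r1, hr1⟩ := ih (n-1) (by omega) hz1 hy (SimpleGraph.Walk.cons h2 q2)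
              (by simp only [SimpleGraph.Walk.length_cons]; omega)
            exact a4 hβ0 hβ hlam0 hparams hx hy (SimpleGraph.Walk.cons h r1)
              (by simp only [SimpleGraph.Walk.length_cons]; omega)
          · obtain ⟨r2, hr2⟩ := ih (n-2) (by omega) hz2 hy q2 (by omega)
            exact a4 hβ0 hβ hlam0 hparams hx hy
              (SimpleGraph.Walk.cons h (SimpleGraph.Walk.cons h2 r2))
              (by simp only [SimpleGraph.Walk.length_cons]; omega)

lemma key {β lam : ℝ} {G : SimpleGraph V} (hβ0 : 0 < β) (hβ : β < 1/20) (hlam0 : 0 < lam)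
    (hparams : 5*β + 2*lam < 1) {u v : V} (hu : Heavy β lam G u)
    (hreach : (sparsified β lam G).Reachable u v) :
    ∃ p : (sparsified β lam G).Walk u v, p.length ≤ 3 := by
  obtain ⟨p⟩ := hreach
  by_cases hv : Heavy β lam G v
  · obtain ⟨r, hr⟩ := claimB hβ0 hβ hlam0 hparams p.length hu hv p le_rfl
    exact ⟨r, by omega⟩
  · cases hq : p.reverse with
    | nil =>
      have h0 : p.length = 0 := by
        have h1 := congrArg SimpleGraph.Walk.length hq
        simpa [SimpleGraph.Walk.length_reverse] using h1
      exact ⟨p, by omega⟩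
    | @cons _ w _ h q' =>
      have hw : Heavy β lam G w := by
        rcases h.2 with h' | h'
        · exact absurd h' hv
        · exact h'
      obtain ⟨r, hr⟩ := claimB hβ0 hβ hlam0 hparams q'.reverse.length hu hw q'.reverse le_rfl
      refine ⟨r.append (SimpleGraph.Walk.cons h.symm SimpleGraph.Walk.nil), ?_⟩
      rw [SimpleGraph.Walk.length_append]
      simp only [SimpleGraph.Walk.length_cons, SimpleGraph.Walk.length_nil]
      omega

lemma main_aux {β lam : ℝ} {G : SimpleGraph V} (hβ0 : 0 < β) (hβ : β < 1/20) (hlam0 : 0 < lam)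
    (hparams : 5*β + 2*lam < 1) {u v : V} (hu : Heavy β lam G u)
    (hreach : (sparsified β lam G).Reachable u v) :
    ((symmDiff (closedNbhd G u) (closedNbhd G v)).card : ℝ)
      < 4 * β * max (deg G u : ℝ) (deg G v : ℝ) := by
  obtain ⟨p, hp⟩ := key hβ0 hβ hlam0 hparams hu hreach
  have hch := (chain hβ0 hβ p).2
  set S := ((symmDiff (closedNbhd G u) (closedNbhd G v)).card : ℝ) with hSdef
  have hS0 : (0:ℝ) ≤ S := Nat.cast_nonneg _
  have hc0 : (0:ℝ) ≤ 1 - β := by linarith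
  have hc1 : (1:ℝ) - β ≤ 1 := by linarith
  set M := max (deg G u : ℝ) (deg G v : ℝ) with hM
  have hM1 : (1:ℝ) ≤ M := le_trans (one_le_deg G u) (le_max_left _ _)
  have hduM : (deg G u : ℝ) ≤ M := le_max_left _ _
  have hS3 : (1-β)^3 * S ≤ 3 * β * M := by
    have h1 : (1-β)^3 ≤ (1-β)^p.length := pow_le_pow_of_le_one hc0 hc1 hp
    have h2 : (1-β)^3 * S ≤ (1-β)^p.length * S := mul_le_mul_of_nonneg_right h1 hS0
    have h3 : (p.length : ℝ) ≤ 3 := by exact_mod_cast hp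
    have hd0 : (0:ℝ) ≤ β * (deg G u : ℝ) := by positivity
    nlinarith
  have h34 : (3:ℝ) < 4 * (1-β)^3 := by
    have h1 : ((19:ℝ)/20)^3 < (1-β)^3 :=
      pow_lt_pow_left₀ (by linarith) (by norm_num) (by norm_num)
    nlinarith
  nlinarith [mul_pos hβ0 (by linarith : (0:ℝ) < M), mul_nonneg (pow_nonneg hc0 3) hS0]

end Stmt7Aux

/-- if `5β + 2λ < 1` and `β < 1/20`, and `u`, `v` lie in the
same connected component of the sparsified graph `G̃` with at least one of
them heavy, then `u` and `v` are in 4-weak agreement. -/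
theorem stmt7 (G : SimpleGraph V) (β lam : ℝ)
    (hβ0 : 0 < β) (hβ : β < 1 / 20) (hlam0 : 0 < lam)
    (hparams : 5 * β + 2 * lam < 1)
    (u v : V)
    (hheavy : Heavy β lam G u ∨ Heavy β lam G v)
    (hreach : (sparsified β lam G).Reachable u v) :
    ((symmDiff (closedNbhd G u) (closedNbhd G v)).card : ℝ)
      < 4 * β * max (deg G u : ℝ) (deg G v : ℝ) := by
  rcases hheavy with hu | hv
  · exact Stmt7Aux.main_aux hβ0 (by linarith) hlam0 (by linarith) hu hreach
  · have h := Stmt7Aux.main_aux hβ0 (by linarith) hlam0 (by linarith) hv hreach.symm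
    rwa [symmDiff_comm, max_comm] at h

end
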